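/- Let H be a real Hilbert space, let α, β : H → H be two bounded self-adjoint coercive operators (so (x,y)_α := (α x, y)_H and (x,y)_β := (β x, y)_H are inner products with norms equivalent to ‖·‖_H), and let T : H → H be a bounded operator that is self-adjoint with respect to both (·,·)_α and (·,·)_β. Then for any constants c₋, c₊ > 0: if c₋ (x,x)_β ≤ (T x, x)_β ≤ c₊ (x,x)_β for all x ∈ H, then also c₋ (x,x)_α ≤ (T x, x)_α ≤ c₊ (x,x)_α for all x ∈ H. -/

import Mathlib

open RealInnerProductSpace

section aux
variable {H : Type*} [NormedAddCommGroup H] [InnerProductSpace ℝ H]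

lemma wsymm (α : H →L[ℝ] H) (hsym : ∀ x z : H, ⟪α x, z⟫ = ⟪x, α z⟫) (x y : H) :
    ⟪α x, y⟫ = ⟪α y, x⟫ := by
  rw [hsym, real_inner_comm]

lemma wnonneg (α : H →L[ℝ] H) (c : ℝ) (hcoer : ∀ x : H, c * ‖x‖ ^ 2 ≤ ⟪α x, x⟫)
    (hc : 0 < c) (y : H) : 0 ≤ ⟪α y, y⟫ :=
  le_trans (by positivity) (hcoer y)

lemma wzero (α : H →L[ℝ] H) (c : ℝ) (hcoer : ∀ x : H, c * ‖x‖ ^ 2 ≤ ⟪α x, x⟫)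
    (hc : 0 < c) (y : H) (hy : ⟪α y, y⟫ = 0) : y = 0 := by
  by_contra h
  have h1 := hcoer y
  rw [hy] at h1
  have hn : 0 < ‖y‖ := norm_pos_iff.mpr h
  nlinarith [mul_pos hc (pow_pos hn 2)]

lemma wcs (α : H →L[ℝ] H) (hsym : ∀ x z : H, ⟪α x, z⟫ = ⟪x, α z⟫)
    (c : ℝ) (hc : 0 < c) (hcoer : ∀ x : H, c * ‖x‖ ^ 2 ≤ ⟪α x, x⟫)
    (x y : H) : ⟪α x, y⟫ ^ 2 ≤ ⟪α x, x⟫ * ⟪α y, y⟫ := by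
  by_cases hy : ⟪α y, y⟫ = 0
  · have hy0 : y = 0 := wzero α c hcoer hc y hy
    simp [hy0]
  · have hyp : 0 < ⟪α y, y⟫ := lt_of_le_of_ne (wnonneg α c hcoer hc y) (Ne.symm hy)
    have hexp : 0 ≤ ⟪α (⟪α y, y⟫ • x - ⟪α x, y⟫ • y), ⟪α y, y⟫ • x - ⟪α x, y⟫ • y⟫ :=
      wnonneg α c hcoer hc _
    have hsymm := wsymm α hsym x y
    simp only [map_sub, map_smul, inner_sub_left, inner_sub_right, inner_smul_left,
      inner_smul_right, conj_trivial, smul_eq_mul] at hexp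
    rw [hsymm] at hexp ⊢
    nlinarith [hexp, hyp]
/-- self-adjointness of powers -/
lemma powsa (α A : H →L[ℝ] H) (hAsa : ∀ x z : H, ⟪α (A x), z⟫ = ⟪α x, A z⟫) :
    ∀ (k : ℕ) (x z : H), ⟪α ((A ^ k) x), z⟫ = ⟪α x, (A ^ k) z⟫ := by
  intro k
  induction k with
  | zero => intro x z; simp
  | succ n ih =>
    intro x z
    have e1 : (A ^ (n + 1)) x = A ((A ^ n) x) := by
      rw [pow_succ']; rfl
    have e2 : (A ^ (n + 1)) z = (A ^ n) (A z) := by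
      rw [pow_succ]; rfl
    rw [e1, e2, hAsa, ih]

/-- KEY: power trick transferring norm bound to Rayleigh bound for α-selfadjoint A -/
lemma key (α A : H →L[ℝ] H) (hsym : ∀ x z : H, ⟪α x, z⟫ = ⟪x, α z⟫)
    (c : ℝ) (hc : 0 < c) (hcoer : ∀ x : H, c * ‖x‖ ^ 2 ≤ ⟪α x, x⟫)
    (hAsa : ∀ x z : H, ⟪α (A x), z⟫ = ⟪α x, A z⟫)
    (r K : ℝ) (hr : 0 ≤ r) (hK : 0 < K)
    (hpow : ∀ (n : ℕ) (x : H), ‖(A ^ n) x‖ ^ 2 ≤ K * r ^ (2 * n) * ‖x‖ ^ 2) :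
    ∀ x : H, |⟪α (A x), x⟫| ≤ r * ⟪α x, x⟫ := by
  intro x
  set Q : H → ℝ := fun y => ⟪α y, y⟫ with hQ
  have hQnn : ∀ y, 0 ≤ Q y := wnonneg α c hcoer hc
  have hcs := wcs α hsym c hc hcoer
  -- constant
  set C : ℝ := max 1 (‖α‖ * K / c) with hC
  have hC1 : (1 : ℝ) ≤ C := le_max_left _ _
  have hC0 : (0 : ℝ) < C := lt_of_lt_of_le one_pos hC1
  -- bound Q (A^m x) ≤ C * r^(2m) * Q x
  have hQbound : ∀ (m : ℕ) (y : H), Q ((A ^ m) y) ≤ C * r ^ (2 * m) * Q y := by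
    intro m y
    have h1 : Q ((A ^ m) y) ≤ ‖α‖ * ‖(A ^ m) y‖ ^ 2 := by
      calc Q ((A ^ m) y) ≤ ‖α ((A ^ m) y)‖ * ‖(A ^ m) y‖ := real_inner_le_norm _ _
        _ ≤ ‖α‖ * ‖(A ^ m) y‖ * ‖(A ^ m) y‖ :=
            mul_le_mul_of_nonneg_right (α.le_opNorm _) (norm_nonneg _)
        _ = ‖α‖ * ‖(A ^ m) y‖ ^ 2 := by ring
    have h2 := hpow m y
    have h3 : c * ‖y‖ ^ 2 ≤ Q y := hcoer y
    have hα0 : 0 ≤ ‖α‖ := norm_nonneg _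
    have hrm : 0 ≤ r ^ (2 * m) := pow_nonneg hr _
    have h4 : ‖α‖ * K / c ≤ C := le_max_right _ _
    have h5 : ‖α‖ * K ≤ C * c := by
      rw [div_le_iff₀ hc] at h4; linarith
    calc Q ((A ^ m) y) ≤ ‖α‖ * ‖(A ^ m) y‖ ^ 2 := h1
      _ ≤ ‖α‖ * (K * r ^ (2 * m) * ‖y‖ ^ 2) := mul_le_mul_of_nonneg_left h2 hα0
      _ = (‖α‖ * K) * (r ^ (2 * m) * ‖y‖ ^ 2) := by ring
      _ ≤ (C * c) * (r ^ (2 * m) * ‖y‖ ^ 2) :=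
          mul_le_mul_of_nonneg_right h5 (mul_nonneg hrm (sq_nonneg _))
      _ = (C * r ^ (2 * m)) * (c * ‖y‖ ^ 2) := by ring
      _ ≤ (C * r ^ (2 * m)) * Q y :=
          mul_le_mul_of_nonneg_left h3 (mul_nonneg (le_of_lt hC0) hrm)
      _ = C * r ^ (2 * m) * Q y := by ring
  -- main induction
  have hmain : ∀ n : ℕ, Q (A x) ^ (2 ^ n) ≤ Q ((A ^ (2 ^ n)) x) * Q x ^ (2 ^ n - 1) := by
    intro n
    induction n with
    | zero => simp [pow_one]
    | succ n ih =>
      have hN : 1 ≤ 2 ^ n := Nat.one_le_two_pow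
      have hsa := powsa α A hAsa
      have step : Q ((A ^ (2 ^ n)) x) ^ 2 ≤ Q ((A ^ (2 ^ (n + 1))) x) * Q x := by
        have e1 : Q ((A ^ (2 ^ n)) x) = ⟪α ((A ^ (2 ^ n + 2 ^ n)) x), x⟫ := by
          have h6 : (A ^ (2 ^ n + 2 ^ n)) x = (A ^ (2 ^ n)) ((A ^ (2 ^ n)) x) := by
            rw [pow_add]; rfl
          show ⟪α ((A ^ (2 ^ n)) x), (A ^ (2 ^ n)) x⟫ = _
          rw [h6, ← hsa (2 ^ n) ((A ^ (2 ^ n)) x) x]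
        have e2 : 2 ^ (n + 1) = 2 ^ n + 2 ^ n := by ring
        rw [e1, e2]
        exact hcs _ _
      calc Q (A x) ^ 2 ^ (n + 1) = (Q (A x) ^ 2 ^ n) ^ 2 := by
            rw [← pow_mul, pow_succ]
        _ ≤ (Q ((A ^ (2 ^ n)) x) * Q x ^ (2 ^ n - 1)) ^ 2 := by
            apply pow_le_pow_left₀ (pow_nonneg (hQnn _) _) ih
        _ = Q ((A ^ (2 ^ n)) x) ^ 2 * Q x ^ (2 * (2 ^ n - 1)) := by
            rw [mul_pow, ← pow_mul]; ring_nf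
        _ ≤ (Q ((A ^ (2 ^ (n + 1))) x) * Q x) * Q x ^ (2 * (2 ^ n - 1)) := by
            apply mul_le_mul_of_nonneg_right step (pow_nonneg (hQnn x) _)
        _ = Q ((A ^ (2 ^ (n + 1))) x) * Q x ^ (2 ^ (n + 1) - 1) := by
            rw [mul_assoc, ← pow_succ']
            congr 2
            omega
  -- rooting
  have hroot : ∀ n : ℕ, Q (A x) ≤ C ^ ((((2 : ℕ) ^ n : ℕ) : ℝ))⁻¹ * (r ^ 2 * Q x) := by
    intro n
    set N : ℕ := 2 ^ n with hNdef
    have hN0 : N ≠ 0 := by positivity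
    have hN1 : 1 ≤ N := Nat.one_le_iff_ne_zero.mpr hN0
    have h1 : Q (A x) ^ N ≤ C * (r ^ 2 * Q x) ^ N := by
      calc Q (A x) ^ N ≤ Q ((A ^ N) x) * Q x ^ (N - 1) := hmain n
        _ ≤ (C * r ^ (2 * N) * Q x) * Q x ^ (N - 1) :=
            mul_le_mul_of_nonneg_right (hQbound N x) (pow_nonneg (hQnn x) _)
        _ = C * (r ^ (2 * N) * Q x ^ N) := by
            have h7 : Q x * Q x ^ (N - 1) = Q x ^ N := by
              rw [← pow_succ']
              congr 1
              omega
            rw [mul_assoc, mul_assoc, h7]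
        _ = C * (r ^ 2 * Q x) ^ N := by rw [mul_pow, pow_mul]
    have hQAnn : 0 ≤ Q (A x) := hQnn _
    have hRnn : 0 ≤ r ^ 2 * Q x := mul_nonneg (sq_nonneg r) (hQnn x)
    have h2 : Q (A x) = ((Q (A x)) ^ N) ^ ((N : ℝ))⁻¹ :=
      (Real.pow_rpow_inv_natCast hQAnn hN0).symm
    rw [h2]
    calc ((Q (A x)) ^ N) ^ ((N : ℝ))⁻¹ ≤ (C * (r ^ 2 * Q x) ^ N) ^ ((N : ℝ))⁻¹ :=
          Real.rpow_le_rpow (pow_nonneg hQAnn _) h1 (by positivity)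
      _ = C ^ ((N : ℝ))⁻¹ * (r ^ 2 * Q x) := by
          rw [Real.mul_rpow (le_of_lt hC0) (pow_nonneg hRnn _),
            Real.pow_rpow_inv_natCast hRnn hN0]
  -- limit
  have hQle : Q (A x) ≤ r ^ 2 * Q x := by
    have hten : Filter.Tendsto (fun n : ℕ => C ^ ((((2 : ℕ) ^ n : ℕ) : ℝ))⁻¹ * (r ^ 2 * Q x))
        Filter.atTop (nhds (1 * (r ^ 2 * Q x))) := by
      apply Filter.Tendsto.mul_const
      have he : Filter.Tendsto (fun n : ℕ => ((((2 : ℕ) ^ n : ℕ) : ℝ))⁻¹) Filter.atTop (nhds 0) := by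
        apply Filter.Tendsto.comp tendsto_inv_atTop_zero
        have : Filter.Tendsto (fun n : ℕ => ((2 : ℝ)) ^ n) Filter.atTop Filter.atTop :=
          tendsto_pow_atTop_atTop_of_one_lt one_lt_two
        simpa using this
      have hcont : ContinuousAt (fun e : ℝ => C ^ e) (0 : ℝ) :=
        Real.continuousAt_const_rpow (ne_of_gt hC0)
      have := hcont.tendsto.comp he
      simpa [Real.rpow_zero, Function.comp_def] using this
    have := ge_of_tendsto' hten (fun n => hroot n)
    simpa using this
  -- conclude via CS
  have hfin : ⟪α (A x), x⟫ ^ 2 ≤ (r * Q x) ^ 2 := by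
    calc ⟪α (A x), x⟫ ^ 2 ≤ Q (A x) * Q x := hcs _ _
      _ ≤ (r ^ 2 * Q x) * Q x := mul_le_mul_of_nonneg_right hQle (hQnn x)
      _ = (r * Q x) ^ 2 := by ring
  have hrQ : 0 ≤ r * Q x := mul_nonneg hr (hQnn x)
  exact abs_le_of_sq_le_sq hfin hrQ

end aux


/-- Let `H` be a real Hilbert space, `α, β : H → H` bounded self-adjoint
coercive operators, and `T : H → H` a bounded operator self-adjoint with respect to both
induced scalar products `(x,y)_α := ⟪α x, y⟫` and `(x,y)_β := ⟪β x, y⟫`. If the Rayleigh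
quotient bounds `c₋ (x,x)_β ≤ (T x, x)_β ≤ c₊ (x,x)_β` hold for all `x`, then the same
bounds hold with `β` replaced by `α`. -/
theorem statement5
    {H : Type*} [NormedAddCommGroup H] [InnerProductSpace ℝ H] [CompleteSpace H]
    (α β T : H →L[ℝ] H)
    (hαsa : ∀ x z : H, ⟪α x, z⟫ = ⟪x, α z⟫)
    (hβsa : ∀ x z : H, ⟪β x, z⟫ = ⟪x, β z⟫)
    (cα : ℝ) (hcα : 0 < cα) (hαcoer : ∀ x : H, cα * ‖x‖ ^ 2 ≤ ⟪α x, x⟫)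
    (cβ : ℝ) (hcβ : 0 < cβ) (hβcoer : ∀ x : H, cβ * ‖x‖ ^ 2 ≤ ⟪β x, x⟫)
    (hTα : ∀ x z : H, ⟪α (T x), z⟫ = ⟪α x, T z⟫)
    (hTβ : ∀ x z : H, ⟪β (T x), z⟫ = ⟪β x, T z⟫)
    (cm cp : ℝ) (hcm : 0 < cm) (hcp : 0 < cp)
    (hβbound : ∀ x : H, cm * ⟪β x, x⟫ ≤ ⟪β (T x), x⟫ ∧ ⟪β (T x), x⟫ ≤ cp * ⟪β x, x⟫) :
    ∀ x : H, cm * ⟪α x, x⟫ ≤ ⟪α (T x), x⟫ ∧ ⟪α (T x), x⟫ ≤ cp * ⟪α x, x⟫ := by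
  by_cases htriv : ∀ y : H, y = 0
  · intro x
    rw [htriv x]
    simp
  · push_neg at htriv
    obtain ⟨x₀, hx₀⟩ := htriv
    -- cm ≤ cp
    have hQβx₀ : 0 < ⟪β x₀, x₀⟫ := by
      have h1 := hβcoer x₀
      have h2 : 0 < ‖x₀‖ := norm_pos_iff.mpr hx₀
      nlinarith [mul_pos hcβ (pow_pos h2 2)]
    have hcmcp : cm ≤ cp := by
      obtain ⟨h1, h2⟩ := hβbound x₀
      have := le_trans h1 h2
      exact le_of_mul_le_mul_right this hQβx₀
    set m : ℝ := (cm + cp) / 2 with hm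
    set r : ℝ := (cp - cm) / 2 with hrdef
    have hr : 0 ≤ r := by simp only [hrdef]; linarith
    set A : H →L[ℝ] H := T - m • ContinuousLinearMap.id ℝ H with hA
    have hAapp : ∀ x : H, A x = T x - m • x := by
      intro x
      simp [hA]
    -- A is selfadjoint wrt α and β
    have hAα : ∀ x z : H, ⟪α (A x), z⟫ = ⟪α x, A z⟫ := by
      intro x z
      rw [hAapp, hAapp]
      simp only [map_sub, map_smul, inner_sub_left, inner_sub_right,
        real_inner_smul_left, real_inner_smul_right]
      rw [hTα x z]
    have hAβ : ∀ x z : H, ⟪β (A x), z⟫ = ⟪β x, A z⟫ := by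
      intro x z
      rw [hAapp, hAapp]
      simp only [map_sub, map_smul, inner_sub_left, inner_sub_right,
        real_inner_smul_left, real_inner_smul_right]
      rw [hTβ x z]
    -- Rayleigh bound for A wrt β
    have hrb : ∀ x : H, |⟪β (A x), x⟫| ≤ r * ⟪β x, x⟫ := by
      intro x
      rw [abs_le]
      obtain ⟨h1, h2⟩ := hβbound x
      rw [hAapp]
      simp only [map_sub, map_smul, inner_sub_left, real_inner_smul_left]
      constructor <;> [skip; skip] <;>
        (simp only [hrdef, hm]; linarith)
    -- polarization bound
    have hb : ∀ (x : H) (t : ℝ), 2 * t * ⟪β (A x), A x⟫ ≤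
        r * ⟪β x, x⟫ + r * t ^ 2 * ⟪β (A x), A x⟫ := by
      intro x t
      set y : H := t • A x with hy
      have cross : ⟪β (A y), x⟫ = ⟪β (A x), y⟫ := by
        rw [hAβ y x, wsymm β hβsa]
      have hpol : 4 * ⟪β (A x), y⟫ = ⟪β (A (x + y)), x + y⟫ - ⟪β (A (x - y)), x - y⟫ := by
        simp only [map_add, map_sub, inner_add_left, inner_add_right,
          inner_sub_left, inner_sub_right]
        linarith [cross]
      have hpar : ⟪β (x + y), x + y⟫ + ⟪β (x - y), x - y⟫ = 2 * ⟪β x, x⟫ + 2 * ⟪β y, y⟫ := by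
        simp only [map_add, map_sub, inner_add_left, inner_add_right,
          inner_sub_left, inner_sub_right]
        ring
      have h1 := (abs_le.mp (hrb (x + y))).2
      have h2 := (abs_le.mp (hrb (x - y))).1
      have h3 : 4 * ⟪β (A x), y⟫ ≤ 2 * r * ⟪β x, x⟫ + 2 * r * ⟪β y, y⟫ := by
        rw [hpol]
        nlinarith [h1, h2, hpar]
      have e1 : ⟪β (A x), y⟫ = t * ⟪β (A x), A x⟫ := by
        rw [hy, real_inner_smul_right]
      have e2 : ⟪β y, y⟫ = t ^ 2 * ⟪β (A x), A x⟫ := by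
        rw [hy, map_smul, real_inner_smul_left, real_inner_smul_right]
        ring
      rw [e1, e2] at h3
      linarith
    -- contraction wrt β
    have claim1 : ∀ x : H, ⟪β (A x), A x⟫ ≤ r ^ 2 * ⟪β x, x⟫ := by
      intro x
      have hQ' : 0 ≤ ⟪β (A x), A x⟫ := wnonneg β cβ hβcoer hcβ _
      have hQx : 0 ≤ ⟪β x, x⟫ := wnonneg β cβ hβcoer hcβ _
      rcases eq_or_lt_of_le hr with hr0 | hrpos
      · have := hb x 1
        rw [← hr0] at this ⊢
        nlinarith
      · have h2 := hb x r⁻¹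
        have e : r * r⁻¹ ^ 2 = r⁻¹ := by
          field_simp
        rw [e] at h2
        have h4 : r⁻¹ * ⟪β (A x), A x⟫ ≤ r * ⟪β x, x⟫ := by
          have h5 : 0 < r⁻¹ := inv_pos.mpr hrpos
          nlinarith
        calc ⟪β (A x), A x⟫ = r * (r⁻¹ * ⟪β (A x), A x⟫) := by
              rw [← mul_assoc, mul_inv_cancel₀ (ne_of_gt hrpos), one_mul]
          _ ≤ r * (r * ⟪β x, x⟫) := mul_le_mul_of_nonneg_left h4 hr
          _ = r ^ 2 * ⟪β x, x⟫ := by ring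
    -- iterated contraction
    have hiter : ∀ (n : ℕ) (x : H), ⟪β ((A ^ n) x), (A ^ n) x⟫ ≤ r ^ (2 * n) * ⟪β x, x⟫ := by
      intro n
      induction n with
      | zero => intro x; simp
      | succ n ih =>
        intro x
        have e : (A ^ (n + 1)) x = (A ^ n) (A x) := by
          rw [pow_succ]; rfl
        rw [e]
        calc ⟪β ((A ^ n) (A x)), (A ^ n) (A x)⟫ ≤ r ^ (2 * n) * ⟪β (A x), A x⟫ := ih (A x)
          _ ≤ r ^ (2 * n) * (r ^ 2 * ⟪β x, x⟫) :=
              mul_le_mul_of_nonneg_left (claim1 x) (pow_nonneg hr _)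
          _ = r ^ (2 * (n + 1)) * ⟪β x, x⟫ := by ring
    -- norm bound for powers
    set K : ℝ := max 1 (‖β‖ / cβ) with hK
    have hK0 : (0 : ℝ) < K := lt_of_lt_of_le one_pos (le_max_left _ _)
    have hpow : ∀ (n : ℕ) (x : H), ‖(A ^ n) x‖ ^ 2 ≤ K * r ^ (2 * n) * ‖x‖ ^ 2 := by
      intro n x
      have h1 : cβ * ‖(A ^ n) x‖ ^ 2 ≤ ⟪β ((A ^ n) x), (A ^ n) x⟫ := hβcoer _
      have h2 := hiter n x
      have h3 : ⟪β x, x⟫ ≤ ‖β‖ * ‖x‖ ^ 2 := by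
        calc ⟪β x, x⟫ ≤ ‖β x‖ * ‖x‖ := real_inner_le_norm _ _
          _ ≤ ‖β‖ * ‖x‖ * ‖x‖ := mul_le_mul_of_nonneg_right (β.le_opNorm _) (norm_nonneg _)
          _ = ‖β‖ * ‖x‖ ^ 2 := by ring
      have h4 : ‖β‖ ≤ cβ * K := by
        have h6 : ‖β‖ / cβ ≤ K := le_max_right 1 (‖β‖ / cβ)
        rw [div_le_iff₀ hcβ] at h6
        linarith
      have hrn : 0 ≤ r ^ (2 * n) := pow_nonneg hr _
      have h5 : cβ * ‖(A ^ n) x‖ ^ 2 ≤ cβ * (K * r ^ (2 * n) * ‖x‖ ^ 2) := by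
        calc cβ * ‖(A ^ n) x‖ ^ 2 ≤ r ^ (2 * n) * ⟪β x, x⟫ := le_trans h1 h2
          _ ≤ r ^ (2 * n) * (‖β‖ * ‖x‖ ^ 2) := mul_le_mul_of_nonneg_left h3 hrn
          _ ≤ r ^ (2 * n) * (cβ * K * ‖x‖ ^ 2) := by
              apply mul_le_mul_of_nonneg_left _ hrn
              exact mul_le_mul_of_nonneg_right h4 (sq_nonneg _)
          _ = cβ * (K * r ^ (2 * n) * ‖x‖ ^ 2) := by ring
      exact le_of_mul_le_mul_left h5 hcβ
    -- apply the key lemma on the α side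
    have habsα := key α A hαsa cα hcα hαcoer hAα r K hr hK0 hpow
    intro x
    have h := abs_le.mp (habsα x)
    have e : ⟪α (A x), x⟫ = ⟪α (T x), x⟫ - m * ⟪α x, x⟫ := by
      rw [hAapp]
      simp only [map_sub, map_smul, inner_sub_left, real_inner_smul_left]
    rw [e] at h
    obtain ⟨h1, h2⟩ := h
    constructor <;> (simp only [hrdef, hm] at h1 h2; linarith)
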